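/- Consider the real Banach space ℓ¹ = ℓ¹(ℕ, ℝ) and the sum functional T : ℓ¹ → ℝ, T x = Σ_{n=0}^∞ x(n). Then T is a strong Daugavet operator, but the restriction of T to the one-dimensional closed subspace spanned by the first unit vector e₀ (namely the map t·e₀ ↦ t from span{e₀} to ℝ) is not a strong Daugavet operator. In particular, the restriction to X₁ of a strong Daugavet operator on an ℓ¹-sum X₁ ⊕_1 X₂ need not be a strong Daugavet operator. -/

import Mathlib

/-- A bounded linear operator `T : X → Y` is a *strong Daugavet operator* if for every
`x, y` in the unit sphere of `X` and every `ε > 0` there is `z` in the unit sphere with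
`‖x + z‖ ≥ 2 - ε` and `‖T (y - z)‖ ≤ ε`. -/
def IsStrongDaugavet {X Y : Type*} [NormedAddCommGroup X] [NormedSpace ℝ X]
    [NormedAddCommGroup Y] [NormedSpace ℝ Y] (T : X →L[ℝ] Y) : Prop :=
  ∀ x y : X, ‖x‖ = 1 → ‖y‖ = 1 → ∀ ε : ℝ, 0 < ε →
    ∃ z : X, ‖z‖ = 1 ∧ 2 - ε ≤ ‖x + z‖ ∧ ‖T (y - z)‖ ≤ ε

/-- The first unit vector `e₀ = (1, 0, 0, …)` of `ℓ¹ = ℓ¹(ℕ, ℝ)`. -/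
noncomputable def e₀ : lp (fun _ : ℕ => ℝ) 1 := lp.single 1 0 (1 : ℝ)

local notation "ℓ₁" => lp (fun _ : ℕ => ℝ) 1

lemma hasSum_abs_norm (x : ℓ₁) : HasSum (fun n => |x n|) ‖x‖ := by
  have := lp.hasSum_norm (p := 1) (by norm_num) x
  simpa using this

lemma summable_abs_l1 (x : ℓ₁) : Summable (fun n => |x n|) :=
  (hasSum_abs_norm x).summable

lemma summable_l1 (x : ℓ₁) : Summable (fun n => x n) :=
  summable_abs_iff.mp (summable_abs_l1 x)

lemma abs_tsum_le_norm (x : ℓ₁) : |∑' n, x n| ≤ ‖x‖ := by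
  calc |∑' n, x n| ≤ ∑' n, |x n| := by
        simpa using norm_tsum_le_tsum_norm (f := fun n => x n)
          (by simpa using summable_abs_l1 x)
    _ = ‖x‖ := (hasSum_abs_norm x).tsum_eq

/-- The sum functional as a continuous linear map. -/
noncomputable def sumL : ℓ₁ →L[ℝ] ℝ :=
  LinearMap.mkContinuous
    { toFun := fun x => ∑' n, x n
      map_add' := fun x y => by
        simp only [lp.coeFn_add, Pi.add_apply]
        exact Summable.tsum_add (summable_l1 x) (summable_l1 y)
      map_smul' := fun c x => by
        simp only [lp.coeFn_smul, Pi.smul_apply, smul_eq_mul, RingHom.id_apply]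
        exact tsum_mul_left }
    1 (fun x => by simpa using abs_tsum_le_norm x)

lemma sumL_apply (x : ℓ₁) : sumL x = ∑' n, x n := rfl

lemma hasSum_two_point {N M : ℕ} (hNM : N ≠ M) (a b : ℝ) (f : ℕ → ℝ)
    (hfN : f N = a) (hfM : f M = b) (hf0 : ∀ n, n ≠ N → n ≠ M → f n = 0) :
    HasSum f (a + b) := by
  have h1 : HasSum (fun n => if n = N then a else 0) a := hasSum_ite_eq N a
  have h2 : HasSum (fun n => if n = M then b else 0) b := hasSum_ite_eq M b
  have := h1.add h2
  convert this using 1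
  funext n
  by_cases hn : n = N
  · subst hn; simp [hfN, hNM]
  · by_cases hm : n = M
    · subst hm; simp [hfM, Ne.symm hNM]
    · simp [hf0 n hn hm, hn, hm]

set_option maxHeartbeats 1000000 in
theorem sumFunctional_strongDaugavet_but_restriction_not :
    (∃ T : lp (fun _ : ℕ => ℝ) 1 →L[ℝ] ℝ,
      (∀ x : lp (fun _ : ℕ => ℝ) 1, T x = ∑' n : ℕ, x n) ∧ IsStrongDaugavet T) ∧
    (∀ S : ↥(Submodule.span ℝ ({e₀} : Set (lp (fun _ : ℕ => ℝ) 1))) →L[ℝ] ℝ,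
      (∀ x : ↥(Submodule.span ℝ ({e₀} : Set (lp (fun _ : ℕ => ℝ) 1))),
        S x = ∑' n : ℕ, (x : lp (fun _ : ℕ => ℝ) 1) n) →
      ¬ IsStrongDaugavet S) := by
  constructor
  · refine ⟨sumL, fun x => rfl, ?_⟩
    intro x y hx hy ε hε
    -- choose N with |x n| small for n ≥ N
    have htend : Filter.Tendsto (fun n => |x n|) Filter.atTop (nhds 0) :=
      (summable_abs_l1 x).tendsto_atTop_zero
    have hev : ∀ᶠ n in Filter.atTop, |x n| < ε / 4 := by
      have := htend.eventually (eventually_lt_nhds (show (0:ℝ) < ε/4 by linarith))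
      simpa using this
    obtain ⟨N, hN⟩ := hev.exists_forall_of_atTop
    set s : ℝ := ∑' n, y n with hs_def
    have hs : |s| ≤ 1 := by rw [← hy]; exact abs_tsum_le_norm y
    set a : ℝ := (1 + s) / 2 with ha_def
    set b : ℝ := (s - 1) / 2 with hb_def
    have ha0 : 0 ≤ a := by rw [ha_def]; cases abs_le.mp hs; linarith
    have hb0 : b ≤ 0 := by rw [hb_def]; cases abs_le.mp hs; linarith
    have hab : |a| + |b| = 1 := by
      rw [abs_of_nonneg ha0, abs_of_nonpos hb0]; ring
    have habs : a + b = s := by rw [ha_def, hb_def]; ring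
    set z : ℓ₁ := a • lp.single 1 N 1 + b • lp.single 1 (N+1) 1 with hz_def
    have hNN1 : N ≠ N + 1 := by omega
    have hzN : z N = a := by
      simp [hz_def, lp.coeFn_add, lp.coeFn_smul, lp.single_apply_self,
        lp.single_apply_ne _ _ _ hNN1, lp.coeFn_single, Pi.single_apply]
      change a * (Pi.single N (1:ℝ) : ℕ → ℝ) N + b * (Pi.single (N+1) (1:ℝ) : ℕ → ℝ) N = a
      simp [Pi.single_apply]
    have hzN1 : z (N+1) = b := by
      simp [hz_def, lp.coeFn_add, lp.coeFn_smul, lp.single_apply_self,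
        lp.single_apply_ne _ _ _ hNN1.symm, lp.coeFn_single, Pi.single_apply]
      change a * (Pi.single N (1:ℝ) : ℕ → ℝ) (N+1) + b * (Pi.single (N+1) (1:ℝ) : ℕ → ℝ) (N+1) = b
      simp [Pi.single_apply]
    have hz0 : ∀ n, n ≠ N → n ≠ N + 1 → z n = 0 := by
      intro n h1 h2
      simp [hz_def, lp.coeFn_add, lp.coeFn_smul,
        lp.single_apply_ne _ _ _ h1, lp.single_apply_ne _ _ _ h2, lp.coeFn_single,
        Pi.single_apply, h1, h2]
      change a * (Pi.single N (1:ℝ) : ℕ → ℝ) n + b * (Pi.single (N+1) (1:ℝ) : ℕ → ℝ) n = 0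
      simp [Pi.single_apply, h1, h2]
    have hzsum : HasSum (fun n => z n) (a + b) :=
      hasSum_two_point hNN1 a b _ hzN hzN1 hz0
    have hzabs : HasSum (fun n => |z n|) (|a| + |b|) :=
      hasSum_two_point hNN1 |a| |b| _ (by rw [hzN]) (by rw [hzN1])
        (fun n h1 h2 => by rw [hz0 n h1 h2, abs_zero])
    have hznorm : ‖z‖ = 1 := by
      rw [(hasSum_abs_norm z).unique hzabs, hab]
    refine ⟨z, hznorm, ?_, ?_⟩
    · -- lower bound for ‖x + z‖
      have hxN : |x N| < ε / 4 := hN N le_rfl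
      have hxN1 : |x (N+1)| < ε / 4 := hN (N+1) (by omega)
      -- the minorant
      set g : ℕ → ℝ := fun n => |x n| + ((if n = N then |a| - 2 * |x N| else 0)
        + (if n = N+1 then |b| - 2 * |x (N+1)| else 0)) with hg_def
      have hg_hasSum : HasSum g (‖x‖ + ((|a| - 2 * |x N|) + (|b| - 2 * |x (N+1)|))) :=
        (hasSum_abs_norm x).add
          ((hasSum_ite_eq N _).add (hasSum_ite_eq (N+1) _))
      have hle : ∀ n, g n ≤ |x n + z n| := by
        intro n
        by_cases h1 : n = N
        · rw [h1]
          have hgN : g N = |x N| + (|a| - 2 * |x N|) := by simp [hg_def, hNN1]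
          rw [hgN, hzN]
          have : |a| - |x N| ≤ |x N + a| := by
            have := abs_sub_abs_le_abs_sub a (-(x N))
            simpa [abs_neg, add_comm, sub_neg_eq_add] using this
          linarith [abs_nonneg (x N)]
        · by_cases h2 : n = N + 1
          · rw [h2]
            have hgN1 : g (N+1) = |x (N+1)| + (|b| - 2 * |x (N+1)|) := by
              simp [hg_def, Ne.symm hNN1]
            rw [hgN1, hzN1]
            have : |b| - |x (N+1)| ≤ |x (N+1) + b| := by
              have := abs_sub_abs_le_abs_sub b (-(x (N+1)))
              simpa [abs_neg, add_comm, sub_neg_eq_add] using this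
            linarith [abs_nonneg (x (N+1))]
          · simp [hg_def, h1, h2, hz0 n h1 h2]
      have hxz : HasSum (fun n => |x n + z n|) ‖x + z‖ := by
        have := hasSum_abs_norm (x + z)
        simpa [lp.coeFn_add, Pi.add_apply] using this
      have := hasSum_le hle hg_hasSum hxz
      rw [hx] at this
      have habs' : |a| + |b| = 1 := hab
      nlinarith [abs_nonneg (x N), abs_nonneg (x (N+1))]
    · -- T (y - z) = 0
      have hTz : sumL z = s := by rw [sumL_apply, hzsum.tsum_eq, habs]
      have hTy : sumL y = s := rfl
      rw [map_sub, hTy, hTz, sub_self, norm_zero]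
      linarith
  · -- the restriction is not a strong Daugavet operator
    intro S hS hSD
    have he₀mem : e₀ ∈ Submodule.span ℝ ({e₀} : Set ℓ₁) :=
      Submodule.subset_span rfl
    have he₀norm : ‖e₀‖ = (1 : ℝ) := by
      have := lp.norm_single (p := 1) (E := fun _ : ℕ => ℝ) (by norm_num)
        0 (1 : ℝ)
      simpa [e₀] using this
    -- tsum of t • e₀ is t
    have htsum : ∀ t : ℝ, ∑' n, ((t • e₀ : ℓ₁) : ℕ → ℝ) n = t := by
      intro t
      have h : HasSum (fun n => ((t • e₀ : ℓ₁) : ℕ → ℝ) n) t := by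
        have h0 : ((t • e₀ : ℓ₁) : ℕ → ℝ) 0 = t := by
          simp [e₀, lp.coeFn_smul, lp.single_apply_self]
        have hne : ∀ n : ℕ, n ≠ 0 → ((t • e₀ : ℓ₁) : ℕ → ℝ) n = 0 := by
          intro n hn
          simp [e₀, lp.coeFn_smul, lp.single_apply_ne _ _ _ hn, lp.coeFn_single, Pi.single_apply, hn]
        have := hasSum_ite_eq (0 : ℕ) t
        convert this using 1
        funext n
        by_cases hn : n = 0
        · subst hn; simp [h0]
        · simp [hne n hn, hn]
      exact h.tsum_eq
    have hxxn : ‖(⟨e₀, he₀mem⟩ : Submodule.span ℝ ({e₀} : Set ℓ₁))‖ = 1 := by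
      rw [Submodule.coe_norm]; exact he₀norm
    have hyyn : ‖(⟨-e₀, neg_mem he₀mem⟩ : Submodule.span ℝ ({e₀} : Set ℓ₁))‖ = 1 := by
      rw [Submodule.coe_norm]; simpa using he₀norm
    obtain ⟨z, hz1, hz2, hz3⟩ :=
      hSD ⟨e₀, he₀mem⟩ ⟨-e₀, neg_mem he₀mem⟩ hxxn hyyn 1 one_pos
    obtain ⟨c, hc⟩ := Submodule.mem_span_singleton.mp z.2
    have hzc : (z : ℓ₁) = c • e₀ := hc.symm
    have hcabs : |c| = 1 := by
      rw [Submodule.coe_norm, hzc, norm_smul, he₀norm, mul_one] at hz1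
      simpa using hz1
    -- compute S (yy - z)
    have hSyz : S (⟨-e₀, neg_mem he₀mem⟩ - z) = -1 - c := by
      rw [hS]
      have hcoe : ((⟨-e₀, neg_mem he₀mem⟩ - z :
          Submodule.span ℝ ({e₀} : Set ℓ₁)) : ℓ₁) = (-1 - c) • e₀ := by
        push_cast
        rw [hzc]
        rw [sub_smul, neg_smul, one_smul]
      rw [hcoe, htsum]
    rw [hSyz] at hz3
    have hc1 : c = -1 := by
      rcases abs_eq (le_of_lt one_pos) |>.mp hcabs with h | h
      · exfalso
        rw [h] at hz3
        norm_num at hz3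
      · exact h
    -- now ‖xx + z‖ = 0, contradicting hz2
    have hxz : ((⟨e₀, he₀mem⟩ + z : Submodule.span ℝ ({e₀} : Set ℓ₁)) : ℓ₁) = 0 := by
      push_cast
      rw [hzc, hc1]
      rw [neg_smul, one_smul, add_neg_cancel]
    have hnorm0 : ‖(⟨e₀, he₀mem⟩ + z : Submodule.span ℝ ({e₀} : Set ℓ₁))‖ = 0 := by
      rw [Submodule.coe_norm, hxz, norm_zero]
    rw [hnorm0] at hz2
    norm_num at hz2
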